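/- Let 0 < α < 1 and β > 0, let φ be an analytic self-map of the open unit disk D, and let g be analytic on D. Then the operator C_φU_g, defined by (C_φU_g f)(z) = ∫₀^{φ(z)} f(ξ) g'(ξ) dξ, is bounded from Z^α to Z^β if and only if (g'∘φ)·φ'' + (g''∘φ)·(φ')² ∈ H_{v_β}^∞ and (g'∘φ)·(φ')² ∈ H_{v_β}^∞. -/

import Mathlib

noncomputable section

/-- The open unit disk in the complex plane. -/
def uD : Set ℂ := Metric.ball 0 1

/-- The Zygmund-type quantity `(1-|z|^2)^a * |f''(z)|`. -/
def zygS (a : ℝ) (f : ℂ → ℂ) (z : ℂ) : ℝ := (1 - ‖z‖ ^ 2) ^ a * ‖deriv (deriv f) z‖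

/-- Membership in the Zygmund-type space `Z^a`. -/
def memZ (a : ℝ) (f : ℂ → ℂ) : Prop :=
  AnalyticOn ℂ f uD ∧ ∃ M : ℝ, ∀ z ∈ uD, zygS a f z ≤ M

/-- The Zygmund-type norm `‖f‖_{Z^a} = |f 0| + |f' 0| + sup_{z ∈ D} (1-|z|^2)^a |f''(z)|`. -/
def zNorm (a : ℝ) (f : ℂ → ℂ) : ℝ := ‖f 0‖ + ‖deriv f 0‖ + sSup (zygS a f '' uD)

/-- Membership in the weighted space `H^∞_{v_b}` (for `u` analytic on `uD`). -/
def memHv (b : ℝ) (u : ℂ → ℂ) : Prop :=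
  ∃ M : ℝ, ∀ z ∈ uD, (1 - ‖z‖ ^ 2) ^ b * ‖u z‖ ≤ M

/-- `T` is a bounded operator from `Z^a` to `Z^b`. -/
def boundedOp (a b : ℝ) (T : (ℂ → ℂ) → ℂ → ℂ) : Prop :=
  (∀ f, memZ a f → memZ b (T f)) ∧
    ∃ C > 0, ∀ f, memZ a f → zNorm b (T f) ≤ C * zNorm a f

/-- `(C_φ U_g f)(z) = ∫₀^{φ(z)} f(ξ) g'(ξ) dξ`, parametrized along the segment from `0` to `φ z`. -/
def CphiUg (g φ : ℂ → ℂ) (f : ℂ → ℂ) : ℂ → ℂ :=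
  fun z => ∫ t in (0:ℝ)..1, φ z * (f ((t : ℂ) * φ z) * deriv g ((t : ℂ) * φ z))


open Metric MeasureTheory intervalIntegral Filter

lemma uD_open : IsOpen uD := isOpen_ball

lemma mem_uD {z : ℂ} : z ∈ uD ↔ ‖z‖ < 1 := mem_ball_zero_iff

lemma smul_mem_uD {z : ℂ} (hz : z ∈ uD) {t : ℝ} (h0 : 0 ≤ t) (h1 : t ≤ 1) :
    (t : ℂ) * z ∈ uD := by
  rw [mem_uD] at *
  calc ‖(t : ℂ) * z‖ = |t| * ‖z‖ := by rw [norm_mul, Complex.norm_real, Real.norm_eq_abs]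
    _ ≤ 1 * ‖z‖ := by
        apply mul_le_mul_of_nonneg_right _ (norm_nonneg z)
        rwa [abs_of_nonneg h0]
    _ < 1 := by rwa [one_mul]

lemma hdAt {f : ℂ → ℂ} (hf : AnalyticOnNhd ℂ f uD) {z : ℂ} (hz : z ∈ uD) :
    HasDerivAt f (deriv f z) z := (hf z hz).differentiableAt.hasDerivAt

/-- Derivative of the parametrized integral. -/
lemma hasDerivAt_int {h : ℂ → ℂ} (hh : AnalyticOnNhd ℂ h uD) {w₀ : ℂ} (hw : w₀ ∈ uD) :
    HasDerivAt (fun w : ℂ => ∫ t in (0:ℝ)..1, w * h ((t : ℂ) * w)) (h w₀) w₀ := by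
  have hw1 : ‖w₀‖ < 1 := mem_uD.1 hw
  set r : ℝ := (1 + ‖w₀‖) / 2 with hr
  have hr1 : r < 1 := by rw [hr]; linarith
  have hwr : ‖w₀‖ < r := by rw [hr]; linarith
  have hr0 : 0 ≤ r := le_trans (norm_nonneg _) hwr.le
  set ε : ℝ := r - ‖w₀‖ with hε
  have ε_pos : 0 < ε := by rw [hε]; linarith
  have hball : Metric.ball w₀ ε ⊆ Metric.closedBall 0 r := by
    intro x hx
    rw [mem_closedBall_zero_iff]
    calc ‖x‖ = ‖(x - w₀) + w₀‖ := by ring_nf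
      _ ≤ ‖x - w₀‖ + ‖w₀‖ := norm_add_le _ _
      _ ≤ ε + ‖w₀‖ := by
          have := mem_ball_iff_norm.1 hx
          linarith
      _ = r := by rw [hε]; ring
  have hcbD : Metric.closedBall (0:ℂ) r ⊆ uD := by
    intro x hx
    rw [mem_closedBall_zero_iff] at hx
    exact mem_uD.2 (lt_of_le_of_lt hx hr1)
  have hhc : ContinuousOn h uD := hh.continuousOn
  have hh'c : ContinuousOn (deriv h) uD := (hh.deriv).continuousOn
  obtain ⟨C₁, hC₁⟩ := (isCompact_closedBall (0:ℂ) r).exists_bound_of_continuousOn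
    (hhc.mono hcbD)
  obtain ⟨C₂, hC₂⟩ := (isCompact_closedBall (0:ℂ) r).exists_bound_of_continuousOn
    (hh'c.mono hcbD)
  have hC₂0 : 0 ≤ C₂ := le_trans (norm_nonneg _) (hC₂ 0 (mem_closedBall_self hr0))
  -- continuity on segment for x in the unit disk
  have hcont : ∀ x : ℂ, ‖x‖ < 1 → ContinuousOn (fun t : ℝ => x * h ((t:ℂ) * x)) (Set.Icc 0 1) := by
    intro x hx
    apply ContinuousOn.mul continuousOn_const
    apply hhc.comp ((Complex.continuous_ofReal.continuousOn).mul continuousOn_const)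
    intro t ht
    exact smul_mem_uD (mem_uD.2 hx) ht.1 ht.2
  have hcont' : ∀ x : ℂ, ‖x‖ < 1 →
      ContinuousOn (fun t : ℝ => h ((t:ℂ) * x) + x * ((t : ℂ) * deriv h ((t:ℂ) * x)))
        (Set.Icc 0 1) := by
    intro x hx
    have hmaps : ∀ t ∈ Set.Icc (0:ℝ) 1, (t:ℂ) * x ∈ uD := fun t ht =>
      smul_mem_uD (mem_uD.2 hx) ht.1 ht.2
    have hi : ContinuousOn (fun t : ℝ => ((t:ℂ) * x)) (Set.Icc 0 1) :=
      (Complex.continuous_ofReal.continuousOn).mul continuousOn_const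
    exact (hhc.comp hi hmaps).add (continuousOn_const.mul
      ((Complex.continuous_ofReal.continuousOn).mul (hh'c.comp hi hmaps)))
  have hIsub : Set.uIoc (0:ℝ) 1 ⊆ Set.Icc 0 1 := by
    rw [Set.uIoc_of_le (zero_le_one)]
    exact Set.Ioc_subset_Icc_self
  have key := intervalIntegral.hasDerivAt_integral_of_dominated_loc_of_deriv_le
    (𝕜 := ℂ) (μ := volume) (a := 0) (b := 1)
    (F := fun x t => x * h ((t:ℂ) * x))
    (F' := fun x t => h ((t:ℂ) * x) + x * ((t : ℂ) * deriv h ((t:ℂ) * x)))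
    (x₀ := w₀) (bound := fun _ => C₁ + C₂) (Metric.ball_mem_nhds w₀ ε_pos)
    ?_ ?_ ?_ ?_ ?_ ?_
  · rw [show h w₀ = ∫ t in (0:ℝ)..1,
        (h ((t:ℂ) * w₀) + w₀ * ((t : ℂ) * deriv h ((t:ℂ) * w₀))) from ?_]
    · exact key.2
    · -- FTC computation
      have hder : ∀ t ∈ Set.uIcc (0:ℝ) 1,
          HasDerivAt (fun s : ℝ => (s:ℂ) * h ((s:ℂ) * w₀))
            (h ((t:ℂ) * w₀) + w₀ * ((t : ℂ) * deriv h ((t:ℂ) * w₀))) t := by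
        intro t ht
        rw [Set.uIcc_of_le zero_le_one] at ht
        have htD : (t:ℂ) * w₀ ∈ uD := smul_mem_uD hw ht.1 ht.2
        have hin : HasDerivAt (fun s : ℂ => s * w₀) ((1:ℂ) * w₀) (t:ℂ) :=
          (hasDerivAt_id _).mul_const w₀
        have hcomp : HasDerivAt (fun s : ℂ => h (s * w₀))
            (deriv h ((t:ℂ) * w₀) * ((1:ℂ) * w₀)) (t:ℂ) :=
          (hdAt hh htD).comp ((t:ℂ)) hin
        have hprod : HasDerivAt (fun s : ℂ => s * h (s * w₀))
            (1 * h ((t:ℂ) * w₀) + (t:ℂ) * (deriv h ((t:ℂ) * w₀) * ((1:ℂ) * w₀))) (t:ℂ) :=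
          (hasDerivAt_id _).mul hcomp
        have := hprod.comp_ofReal
        convert this using 1
        ring
      have hint : IntervalIntegrable
          (fun t : ℝ => h ((t:ℂ) * w₀) + w₀ * ((t : ℂ) * deriv h ((t:ℂ) * w₀)))
          volume 0 1 := by
        apply ContinuousOn.intervalIntegrable
        rw [Set.uIcc_of_le zero_le_one]
        exact hcont' w₀ hw1
      have := intervalIntegral.integral_eq_sub_of_hasDerivAt hder hint
      rw [this]
      simp
  · -- hF_meas
    filter_upwards [uD_open.mem_nhds hw] with x hx
    exact ((hcont x (mem_uD.1 hx)).mono hIsub).aestronglyMeasurable measurableSet_uIoc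
  · -- hF_int
    apply ContinuousOn.intervalIntegrable
    rw [Set.uIcc_of_le zero_le_one]
    exact hcont w₀ hw1
  · -- hF'_meas
    exact ((hcont' w₀ hw1).mono hIsub).aestronglyMeasurable measurableSet_uIoc
  · -- h_bound
    apply Filter.Eventually.of_forall
    intro t ht x hx
    rw [Set.uIoc_of_le zero_le_one] at ht
    have hxr : ‖x‖ ≤ r := mem_closedBall_zero_iff.1 (hball hx)
    have htx : (t:ℂ) * x ∈ Metric.closedBall (0:ℂ) r := by
      rw [mem_closedBall_zero_iff, norm_mul, Complex.norm_real, Real.norm_eq_abs,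
        abs_of_nonneg ht.1.le]
      calc t * ‖x‖ ≤ 1 * r := by
            apply mul_le_mul ht.2 hxr (norm_nonneg _) zero_le_one
        _ = r := one_mul r
    calc ‖h ((t:ℂ) * x) + x * ((t : ℂ) * deriv h ((t:ℂ) * x))‖
        ≤ ‖h ((t:ℂ) * x)‖ + ‖x * ((t : ℂ) * deriv h ((t:ℂ) * x))‖ := norm_add_le _ _
      _ ≤ C₁ + C₂ := by
          gcongr
          · exact hC₁ _ htx
          · rw [norm_mul, norm_mul, Complex.norm_real, Real.norm_eq_abs,
              abs_of_nonneg ht.1.le]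
            have h1 : ‖x‖ ≤ 1 := hxr.trans hr1.le
            have h2 : ‖deriv h ((t:ℂ) * x)‖ ≤ C₂ := hC₂ _ htx
            have h3 : t * ‖deriv h ((t:ℂ) * x)‖ ≤ C₂ := by
              calc t * ‖deriv h ((t:ℂ) * x)‖ ≤ 1 * C₂ :=
                    mul_le_mul ht.2 h2 (norm_nonneg _) zero_le_one
                _ = C₂ := one_mul _
            calc ‖x‖ * (t * ‖deriv h ((t:ℂ) * x)‖) ≤ 1 * C₂ := by
                  exact mul_le_mul h1 h3 (mul_nonneg ht.1.le (norm_nonneg _)) zero_le_one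
              _ = C₂ := one_mul _
  · exact intervalIntegrable_const
  · -- h_diff
    apply Filter.Eventually.of_forall
    intro t ht x hx
    rw [Set.uIoc_of_le zero_le_one] at ht
    have htx : (t:ℂ) * x ∈ uD := by
      apply hcbD
      rw [mem_closedBall_zero_iff, norm_mul, Complex.norm_real, Real.norm_eq_abs,
        abs_of_nonneg ht.1.le]
      have hxr : ‖x‖ ≤ r := mem_closedBall_zero_iff.1 (hball hx)
      calc t * ‖x‖ ≤ 1 * r := mul_le_mul ht.2 hxr (norm_nonneg _) zero_le_one
        _ = r := one_mul r
    have hin : HasDerivAt (fun y : ℂ => (t:ℂ) * y) ((t:ℂ) * 1) x :=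
      (hasDerivAt_id _).const_mul ((t:ℂ))
    have hcomp : HasDerivAt (fun y : ℂ => h ((t:ℂ) * y))
        (deriv h ((t:ℂ) * x) * ((t:ℂ) * 1)) x := (hdAt hh htx).comp _ hin
    have hprod : HasDerivAt (fun y : ℂ => id y * h ((t:ℂ) * y))
        (1 * h ((t:ℂ) * x) + id x * (deriv h ((t:ℂ) * x) * ((t:ℂ) * 1))) x :=
      (hasDerivAt_id x).mul hcomp
    exact hprod.congr_deriv (by simp only [id_eq]; ring)

variable {φ g f : ℂ → ℂ}

lemma hasDerivAt_T (hφ : AnalyticOnNhd ℂ φ uD) (hφm : Set.MapsTo φ uD uD)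
    (hg : AnalyticOnNhd ℂ g uD) (hf : AnalyticOnNhd ℂ f uD) {z : ℂ} (hz : z ∈ uD) :
    HasDerivAt (CphiUg g φ f) (f (φ z) * deriv g (φ z) * deriv φ z) z := by
  have hh : AnalyticOnNhd ℂ (fun w => f w * deriv g w) uD := hf.mul hg.deriv
  have h1 := hasDerivAt_int hh (hφm hz)
  have h2 := hdAt hφ hz
  have h3 := HasDerivAt.comp z h1 h2
  have h4 : CphiUg g φ f =
      (fun w : ℂ => ∫ t in (0:ℝ)..1, w * (fun w => f w * deriv g w) ((t : ℂ) * w)) ∘ φ := rfl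
  rw [h4]
  exact h3

lemma deriv2_T (hφ : AnalyticOnNhd ℂ φ uD) (hφm : Set.MapsTo φ uD uD)
    (hg : AnalyticOnNhd ℂ g uD) (hf : AnalyticOnNhd ℂ f uD) {z : ℂ} (hz : z ∈ uD) :
    deriv (deriv (CphiUg g φ f)) z =
      deriv f (φ z) * deriv g (φ z) * (deriv φ z) ^ 2 +
        f (φ z) * (deriv g (φ z) * deriv (deriv φ) z +
          deriv (deriv g) (φ z) * (deriv φ z) ^ 2) := by
  have hEq : deriv (CphiUg g φ f) =ᶠ[nhds z]
      fun w => f (φ w) * deriv g (φ w) * deriv φ w :=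
    Filter.eventually_of_mem (uD_open.mem_nhds hz)
      (fun w hw => (hasDerivAt_T hφ hφm hg hf hw).deriv)
  rw [hEq.deriv_eq]
  have hφ' := hdAt hφ hz
  have hfφ : HasDerivAt (fun w => f (φ w)) (deriv f (φ z) * deriv φ z) z :=
    (hdAt hf (hφm hz)).comp z hφ'
  have hgφ : HasDerivAt (fun w => deriv g (φ w)) (deriv (deriv g) (φ z) * deriv φ z) z :=
    (hdAt hg.deriv (hφm hz)).comp z hφ'
  have hφ'' : HasDerivAt (deriv φ) (deriv (deriv φ) z) z := hdAt hφ.deriv hz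
  have := ((hfφ.mul hgφ).mul hφ'').deriv
  rw [show (fun w => f (φ w) * deriv g (φ w) * deriv φ w) =
    ((fun w => f (φ w)) * fun w => deriv g (φ w)) * deriv φ from rfl, this]
  simp only [Pi.mul_apply]
  ring

lemma ftc_seg {q : ℂ → ℂ} (hq : AnalyticOnNhd ℂ q uD) {w : ℂ} (hw : w ∈ uD) :
    q w - q 0 = ∫ t in (0:ℝ)..1, w * deriv q ((t : ℂ) * w) := by
  have hder : ∀ t ∈ Set.uIcc (0:ℝ) 1,
      HasDerivAt (fun s : ℝ => q ((s:ℂ) * w)) (w * deriv q ((t:ℂ) * w)) t := by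
    intro t ht
    rw [Set.uIcc_of_le zero_le_one] at ht
    have htD : (t:ℂ) * w ∈ uD := smul_mem_uD hw ht.1 ht.2
    have hin : HasDerivAt (fun s : ℂ => s * w) ((1:ℂ) * w) (t:ℂ) :=
      (hasDerivAt_id _).mul_const w
    have hcomp : HasDerivAt (fun s : ℂ => q (s * w))
        (deriv q ((t:ℂ) * w) * ((1:ℂ) * w)) (t:ℂ) := (hdAt hq htD).comp ((t:ℂ)) hin
    have := hcomp.comp_ofReal
    convert this using 1
    ring
  have hint : IntervalIntegrable (fun t : ℝ => w * deriv q ((t:ℂ) * w)) volume 0 1 := by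
    apply ContinuousOn.intervalIntegrable
    rw [Set.uIcc_of_le zero_le_one]
    apply ContinuousOn.mul continuousOn_const
    apply (hq.deriv.continuousOn).comp
      ((Complex.continuous_ofReal.continuousOn).mul continuousOn_const)
    intro t ht
    exact smul_mem_uD hw ht.1 ht.2
  have := intervalIntegral.integral_eq_sub_of_hasDerivAt hder hint
  rw [this]
  simp

lemma S_nonneg {α : ℝ} {f : ℂ → ℂ} {S : ℝ}
    (hS : ∀ z ∈ uD, (1 - ‖z‖ ^ 2) ^ α * ‖deriv (deriv f) z‖ ≤ S) : 0 ≤ S := by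
  have h0 : (0:ℂ) ∈ uD := mem_uD.2 (by norm_num)
  have := hS 0 h0
  simp only [norm_zero] at this
  calc (0:ℝ) ≤ (1 - 0 ^ 2) ^ α * ‖deriv (deriv f) 0‖ := by positivity
    _ ≤ S := this

lemma deriv_bound {α : ℝ} (hα0 : 0 < α) (hα1 : α < 1) {f : ℂ → ℂ}
    (hf : AnalyticOnNhd ℂ f uD) {S : ℝ}
    (hS : ∀ z ∈ uD, (1 - ‖z‖ ^ 2) ^ α * ‖deriv (deriv f) z‖ ≤ S)
    {w : ℂ} (hw : w ∈ uD) :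
    ‖deriv f w‖ ≤ ‖deriv f 0‖ + S * (1 / (1 - α)) := by
  have hS0 : 0 ≤ S := S_nonneg hS
  have hkey := ftc_seg hf.deriv hw
  have hbint : IntervalIntegrable (fun t : ℝ => S * (1 - t) ^ (-α)) volume 0 1 := by
    have h1 : IntervalIntegrable (fun x : ℝ => x ^ (-α)) volume 0 1 :=
      intervalIntegrable_rpow' (by linarith)
    have h2 := (h1.comp_sub_left 1).const_mul S
    norm_num at h2
    exact h2.symm
  have hle : ‖∫ t in (0:ℝ)..1, w * deriv (deriv f) ((t:ℂ) * w)‖ ≤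
      |∫ t in (0:ℝ)..1, S * (1 - t) ^ (-α)| := by
    apply intervalIntegral.norm_integral_le_abs_of_norm_le _ hbint
    have hae : ∀ᵐ t ∂(volume.restrict (Set.uIoc (0:ℝ) 1)), t ≠ 1 := by
      apply ae_restrict_of_ae
      rw [ae_iff]
      have : {a : ℝ | ¬a ≠ 1} = {1} := by ext x; simp
      rw [this]
      exact measure_singleton 1
    filter_upwards [ae_restrict_mem measurableSet_uIoc, hae] with t htI htne
    rw [Set.uIoc_of_le zero_le_one] at htI
    have ht0 : 0 < t := htI.1
    have ht1 : t < 1 := lt_of_le_of_ne htI.2 htne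
    have htD : (t:ℂ) * w ∈ uD := smul_mem_uD hw ht0.le ht1.le
    set m : ℝ := ‖(t:ℂ) * w‖ with hm
    have hm1 : m < 1 := mem_uD.1 htD
    have hm0 : 0 ≤ m := norm_nonneg _
    have hmt : 1 - t ≤ 1 - m ^ 2 := by
      have h1 : m ≤ t := by
        rw [hm, norm_mul, Complex.norm_real, Real.norm_eq_abs, abs_of_nonneg ht0.le]
        calc t * ‖w‖ ≤ t * 1 := by
              apply mul_le_mul_of_nonneg_left (mem_uD.1 hw).le ht0.le
          _ = t := mul_one t
      nlinarith
    have hpos : (0:ℝ) < 1 - t := by linarith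
    have hpos2 : (0:ℝ) < 1 - m ^ 2 := lt_of_lt_of_le hpos hmt
    have hf'' : ‖deriv (deriv f) ((t:ℂ) * w)‖ ≤ S * (1 - m ^ 2) ^ (-α) := by
      have := hS _ htD
      rw [← hm] at this
      rw [Real.rpow_neg hpos2.le, mul_comm S]
      rw [inv_mul_eq_div, le_div_iff₀ (Real.rpow_pos_of_pos hpos2 α)]
      linarith [this]
    calc ‖w * deriv (deriv f) ((t:ℂ) * w)‖
        = ‖w‖ * ‖deriv (deriv f) ((t:ℂ) * w)‖ := norm_mul _ _
      _ ≤ 1 * (S * (1 - m ^ 2) ^ (-α)) := by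
          apply mul_le_mul (mem_uD.1 hw).le hf'' (norm_nonneg _) zero_le_one
      _ = S * (1 - m ^ 2) ^ (-α) := one_mul _
      _ ≤ S * (1 - t) ^ (-α) := by
          apply mul_le_mul_of_nonneg_left _ hS0
          exact Real.rpow_le_rpow_of_nonpos hpos hmt (by linarith)
  have hval : ∫ t in (0:ℝ)..1, S * (1 - t) ^ (-α) = S * (1 / (1 - α)) := by
    rw [intervalIntegral.integral_const_mul]
    congr 1
    have h2 := intervalIntegral.integral_comp_sub_left (a := 0) (b := 1) (fun x : ℝ => x ^ (-α)) 1
    norm_num at h2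
    rw [h2, integral_rpow (Or.inl (by linarith))]
    rw [Real.zero_rpow (by linarith : -α + 1 ≠ 0), Real.one_rpow]
    rw [show -α + 1 = 1 - α by ring]
    norm_num
  rw [hval] at hle
  have habs : |S * (1 / (1 - α))| = S * (1 / (1 - α)) := by
    apply abs_of_nonneg
    have : 0 < 1 - α := by linarith
    positivity
  rw [habs] at hle
  calc ‖deriv f w‖ = ‖deriv f 0 + (deriv f w - deriv f 0)‖ := by ring_nf
    _ ≤ ‖deriv f 0‖ + ‖deriv f w - deriv f 0‖ := norm_add_le _ _
    _ ≤ ‖deriv f 0‖ + S * (1 / (1 - α)) := by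
        rw [hkey]
        linarith [hle]

lemma f_bound {f : ℂ → ℂ} (hf : AnalyticOnNhd ℂ f uD) {K : ℝ}
    (hK : ∀ w ∈ uD, ‖deriv f w‖ ≤ K) {w : ℂ} (hw : w ∈ uD) :
    ‖f w‖ ≤ ‖f 0‖ + K := by
  have hkey := ftc_seg hf hw
  have hle : ‖∫ t in (0:ℝ)..1, w * deriv f ((t:ℂ) * w)‖ ≤ K * |1 - 0| := by
    apply intervalIntegral.norm_integral_le_of_norm_le_const
    intro t ht
    rw [Set.uIoc_of_le zero_le_one] at ht
    have htD : (t:ℂ) * w ∈ uD := smul_mem_uD hw ht.1.le ht.2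
    calc ‖w * deriv f ((t:ℂ) * w)‖ = ‖w‖ * ‖deriv f ((t:ℂ) * w)‖ := norm_mul _ _
      _ ≤ 1 * K := mul_le_mul (mem_uD.1 hw).le (hK _ htD) (norm_nonneg _) zero_le_one
      _ = K := one_mul K
  rw [show |(1:ℝ) - 0| = 1 by norm_num, mul_one] at hle
  calc ‖f w‖ = ‖f 0 + (f w - f 0)‖ := by ring_nf
    _ ≤ ‖f 0‖ + ‖f w - f 0‖ := norm_add_le _ _
    _ ≤ ‖f 0‖ + K := by rw [hkey]; linarith

lemma h0D : (0:ℂ) ∈ uD := mem_uD.2 (by norm_num)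

lemma weight_nonneg {z : ℂ} (hz : z ∈ uD) (b : ℝ) : 0 ≤ (1 - ‖z‖ ^ 2) ^ b := by
  have h1 : ‖z‖ < 1 := mem_uD.1 hz
  have h2 : (0:ℝ) ≤ 1 - ‖z‖ ^ 2 := by nlinarith [norm_nonneg z]
  exact Real.rpow_nonneg h2 b

lemma zygS_nonneg {a : ℝ} {f : ℂ → ℂ} {z : ℂ} (hz : z ∈ uD) : 0 ≤ zygS a f z :=
  mul_nonneg (weight_nonneg hz a) (norm_nonneg _)

lemma zNorm_nonneg {a : ℝ} {f : ℂ → ℂ} (hf : memZ a f) : 0 ≤ zNorm a f := by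
  obtain ⟨-, M, hM⟩ := hf
  have hbdd : BddAbove (zygS a f '' uD) := ⟨M, by rintro x ⟨z, hz, rfl⟩; exact hM z hz⟩
  have hsup : 0 ≤ sSup (zygS a f '' uD) :=
    le_trans (zygS_nonneg h0D) (le_csSup hbdd ⟨0, h0D, rfl⟩)
  have h1 := norm_nonneg (f 0)
  have h2 := norm_nonneg (deriv f 0)
  rw [zNorm]
  linarith

theorem stmt_6 (α β : ℝ) (hα0 : 0 < α) (hα1 : α < 1) (hβ : 0 < β)
    (φ g : ℂ → ℂ) (hφ : AnalyticOn ℂ φ uD) (hφm : Set.MapsTo φ uD uD)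
    (hg : AnalyticOn ℂ g uD) :
    boundedOp α β (CphiUg g φ) ↔
      (memHv β (fun z => deriv g (φ z) * deriv (deriv φ) z + deriv (deriv g) (φ z) * (deriv φ z) ^ 2) ∧ memHv β (fun z => deriv g (φ z) * (deriv φ z) ^ 2)) := by
  have hφN : AnalyticOnNhd ℂ φ uD := (uD_open.analyticOn_iff_analyticOnNhd).1 hφ
  have hgN : AnalyticOnNhd ℂ g uD := (uD_open.analyticOn_iff_analyticOnNhd).1 hg
  constructor
  · rintro ⟨hmap, -⟩
    have hone : memZ α (fun _ : ℂ => (1:ℂ)) := by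
      refine ⟨analyticOnNhd_const.analyticOn, 0, fun z hz => ?_⟩
      simp [zygS, deriv_const']
    have hid : memZ α (fun w : ℂ => w) := by
      refine ⟨(analyticOnNhd_id).analyticOn, 0, fun z hz => ?_⟩
      simp [zygS, deriv_id'']
    obtain ⟨-, M₁, hM₁⟩ := hmap _ hone
    obtain ⟨-, M₂, hM₂⟩ := hmap _ hid
    have hA : ∀ z ∈ uD, deriv (deriv (CphiUg g φ (fun _ : ℂ => (1:ℂ)))) z =
        deriv g (φ z) * deriv (deriv φ) z + deriv (deriv g) (φ z) * (deriv φ z) ^ 2 := by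
      intro z hz
      rw [deriv2_T hφN hφm hgN analyticOnNhd_const hz]
      simp [deriv_const']
    have hB : ∀ z ∈ uD, deriv (deriv (CphiUg g φ (fun w : ℂ => w))) z =
        deriv g (φ z) * (deriv φ z) ^ 2 +
          φ z * (deriv g (φ z) * deriv (deriv φ) z + deriv (deriv g) (φ z) * (deriv φ z) ^ 2) := by
      intro z hz
      rw [deriv2_T hφN hφm hgN analyticOnNhd_id hz]
      simp [deriv_id'']
    constructor
    · refine ⟨M₁, fun z hz => ?_⟩
      have h1 := hM₁ z hz
      rw [zygS, hA z hz] at h1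
      exact h1
    · refine ⟨M₂ + M₁, fun z hz => ?_⟩
      have h2 := hM₂ z hz
      rw [zygS, hB z hz] at h2
      have h1 := hM₁ z hz
      rw [zygS, hA z hz] at h1
      set Az := deriv g (φ z) * deriv (deriv φ) z + deriv (deriv g) (φ z) * (deriv φ z) ^ 2
        with hAz
      set Bz := deriv g (φ z) * (deriv φ z) ^ 2 with hBz
      have hP0 : 0 ≤ (1 - ‖z‖ ^ 2) ^ β := weight_nonneg hz β
      have hnorm : ‖Bz‖ ≤ ‖Bz + φ z * Az‖ + ‖Az‖ := by
        have he : Bz = (Bz + φ z * Az) - φ z * Az := by ring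
        calc ‖Bz‖ = ‖(Bz + φ z * Az) - φ z * Az‖ := by rw [← he]
          _ ≤ ‖Bz + φ z * Az‖ + ‖φ z * Az‖ := norm_sub_le _ _
          _ ≤ ‖Bz + φ z * Az‖ + ‖Az‖ := by
              gcongr
              rw [norm_mul]
              calc ‖φ z‖ * ‖Az‖ ≤ 1 * ‖Az‖ :=
                    mul_le_mul_of_nonneg_right (mem_uD.1 (hφm hz)).le (norm_nonneg _)
                _ = ‖Az‖ := one_mul _
      calc (1 - ‖z‖ ^ 2) ^ β * ‖Bz‖
          ≤ (1 - ‖z‖ ^ 2) ^ β * (‖Bz + φ z * Az‖ + ‖Az‖) :=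
            mul_le_mul_of_nonneg_left hnorm hP0
        _ = (1 - ‖z‖ ^ 2) ^ β * ‖Bz + φ z * Az‖ + (1 - ‖z‖ ^ 2) ^ β * ‖Az‖ := mul_add _ _ _
        _ ≤ M₂ + M₁ := add_le_add h2 h1
  · rintro ⟨⟨M₁, hM₁⟩, ⟨M₂, hM₂⟩⟩
    have hM₁0 : 0 ≤ M₁ :=
      le_trans (mul_nonneg (weight_nonneg h0D β) (norm_nonneg _)) (hM₁ 0 h0D)
    have hM₂0 : 0 ≤ M₂ :=
      le_trans (mul_nonneg (weight_nonneg h0D β) (norm_nonneg _)) (hM₂ 0 h0D)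
    have hr1 : ‖φ 0‖ < 1 := mem_uD.1 (hφm h0D)
    have hcb : Metric.closedBall (0:ℂ) ‖φ 0‖ ⊆ uD := fun x hx =>
      mem_uD.2 (lt_of_le_of_lt (mem_closedBall_zero_iff.1 hx) hr1)
    obtain ⟨G, hG⟩ := (isCompact_closedBall (0:ℂ) ‖φ 0‖).exists_bound_of_continuousOn
      ((hgN.deriv.continuousOn).mono hcb)
    have hG0 : 0 ≤ G :=
      le_trans (norm_nonneg _) (hG (φ 0) (mem_closedBall_zero_iff.2 le_rfl))
    have h1α : (0:ℝ) < 1 - α := by linarith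
    set c₁ : ℝ := 1 + 1 / (1 - α) with hc₁
    have hc₁0 : 0 ≤ c₁ := by rw [hc₁]; positivity
    set c₂ : ℝ := 1 + c₁ with hc₂
    have hc₂0 : 0 ≤ c₂ := by rw [hc₂]; linarith
    set C₀ : ℝ := c₂ * G + c₂ * G * ‖deriv φ 0‖ + (c₁ * M₂ + c₂ * M₁) with hC₀
    have hC₀0 : 0 ≤ C₀ := by
      rw [hC₀]
      have := norm_nonneg (deriv φ 0)
      positivity
    have main : ∀ f, memZ α f →
        memZ β (CphiUg g φ f) ∧ zNorm β (CphiUg g φ f) ≤ C₀ * zNorm α f := by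
      rintro f ⟨hfa, Mf, hMf⟩
      have hfN : AnalyticOnNhd ℂ f uD := (uD_open.analyticOn_iff_analyticOnNhd).1 hfa
      have hbdd : BddAbove (zygS α f '' uD) := ⟨Mf, by rintro x ⟨z, hz, rfl⟩; exact hMf z hz⟩
      set S := sSup (zygS α f '' uD) with hSdef
      have hSle : ∀ z ∈ uD, zygS α f z ≤ S := fun z hz => le_csSup hbdd ⟨z, hz, rfl⟩
      have hS0 : 0 ≤ S := le_trans (zygS_nonneg h0D) (hSle 0 h0D)
      set N := zNorm α f with hN
      have hNeq : N = ‖f 0‖ + ‖deriv f 0‖ + S := rfl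
      have hN0 : 0 ≤ N := by
        rw [hNeq]
        have := norm_nonneg (f 0); have := norm_nonneg (deriv f 0); linarith
      have hfd : ∀ w ∈ uD, ‖deriv f w‖ ≤ c₁ * N := by
        intro w hw
        have hdb := deriv_bound hα0 hα1 hfN (fun z hz => hSle z hz) hw
        have h1 : ‖deriv f 0‖ ≤ N := by
          rw [hNeq]; have := norm_nonneg (f 0); linarith
        have h2 : S ≤ N := by
          rw [hNeq]; have := norm_nonneg (f 0); have := norm_nonneg (deriv f 0); linarith
        have h3 : (0:ℝ) ≤ 1 / (1 - α) := by positivity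
        calc ‖deriv f w‖ ≤ ‖deriv f 0‖ + S * (1 / (1 - α)) := hdb
          _ ≤ N + N * (1 / (1 - α)) := by nlinarith
          _ = c₁ * N := by rw [hc₁]; ring
      have hfb : ∀ w ∈ uD, ‖f w‖ ≤ c₂ * N := by
        intro w hw
        have := f_bound hfN hfd hw
        have h1 : ‖f 0‖ ≤ N := by
          rw [hNeq]; have := norm_nonneg (deriv f 0); linarith
        calc ‖f w‖ ≤ ‖f 0‖ + c₁ * N := this
          _ ≤ N + c₁ * N := by linarith
          _ = c₂ * N := by rw [hc₂]; ring
      have hzyg : ∀ z ∈ uD, zygS β (CphiUg g φ f) z ≤ (c₁ * M₂ + c₂ * M₁) * N := by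
        intro z hz
        rw [zygS, deriv2_T hφN hφm hgN hfN hz]
        set P := (1 - ‖z‖ ^ 2) ^ β with hP
        have hP0 : 0 ≤ P := weight_nonneg hz β
        set Az := deriv g (φ z) * deriv (deriv φ) z + deriv (deriv g) (φ z) * (deriv φ z) ^ 2
          with hAz
        set Bz := deriv g (φ z) * (deriv φ z) ^ 2 with hBz
        have hsplit : ‖deriv f (φ z) * deriv g (φ z) * (deriv φ z) ^ 2 + f (φ z) * Az‖ ≤
            ‖deriv f (φ z)‖ * ‖Bz‖ + ‖f (φ z)‖ * ‖Az‖ := by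
          calc ‖deriv f (φ z) * deriv g (φ z) * (deriv φ z) ^ 2 + f (φ z) * Az‖
              ≤ ‖deriv f (φ z) * deriv g (φ z) * (deriv φ z) ^ 2‖ + ‖f (φ z) * Az‖ :=
                norm_add_le _ _
            _ = ‖deriv f (φ z)‖ * ‖Bz‖ + ‖f (φ z)‖ * ‖Az‖ := by
                simp only [hBz, mul_assoc, norm_mul]
        calc P * ‖deriv f (φ z) * deriv g (φ z) * (deriv φ z) ^ 2 + f (φ z) * Az‖
            ≤ P * (‖deriv f (φ z)‖ * ‖Bz‖ + ‖f (φ z)‖ * ‖Az‖) :=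
              mul_le_mul_of_nonneg_left hsplit hP0
          _ = ‖deriv f (φ z)‖ * (P * ‖Bz‖) + ‖f (φ z)‖ * (P * ‖Az‖) := by ring
          _ ≤ (c₁ * N) * M₂ + (c₂ * N) * M₁ := by
              apply add_le_add
              · exact mul_le_mul (hfd _ (hφm hz)) (hM₂ z hz)
                  (mul_nonneg hP0 (norm_nonneg _)) (by positivity)
              · exact mul_le_mul (hfb _ (hφm hz)) (hM₁ z hz)
                  (mul_nonneg hP0 (norm_nonneg _)) (by positivity)
          _ = (c₁ * M₂ + c₂ * M₁) * N := by ring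
      have hTan : AnalyticOn ℂ (CphiUg g φ f) uD := by
        rw [uD_open.analyticOn_iff_analyticOnNhd]
        apply DifferentiableOn.analyticOnNhd _ uD_open
        intro z hz
        exact (hasDerivAt_T hφN hφm hgN hfN hz).differentiableAt.differentiableWithinAt
      have hmem : memZ β (CphiUg g φ f) := by
        exact ⟨hTan, (c₁ * M₂ + c₂ * M₁) * N, hzyg⟩
      refine ⟨hmem, ?_⟩
      have hT0 : ‖CphiUg g φ f 0‖ ≤ c₂ * G * N := by
        have hle : ‖∫ t in (0:ℝ)..1,
            φ 0 * (f ((t:ℂ) * φ 0) * deriv g ((t:ℂ) * φ 0))‖ ≤ (c₂ * N * G) * |1 - 0| := by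
          apply intervalIntegral.norm_integral_le_of_norm_le_const
          intro t ht
          rw [Set.uIoc_of_le zero_le_one] at ht
          have htD : (t:ℂ) * φ 0 ∈ uD := smul_mem_uD (hφm h0D) ht.1.le ht.2
          have htcb : (t:ℂ) * φ 0 ∈ Metric.closedBall (0:ℂ) ‖φ 0‖ := by
            rw [mem_closedBall_zero_iff, norm_mul, Complex.norm_real, Real.norm_eq_abs,
              abs_of_nonneg ht.1.le]
            calc t * ‖φ 0‖ ≤ 1 * ‖φ 0‖ :=
                  mul_le_mul_of_nonneg_right ht.2 (norm_nonneg _)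
              _ = ‖φ 0‖ := one_mul _
          calc ‖φ 0 * (f ((t:ℂ) * φ 0) * deriv g ((t:ℂ) * φ 0))‖
              = ‖φ 0‖ * (‖f ((t:ℂ) * φ 0)‖ * ‖deriv g ((t:ℂ) * φ 0)‖) := by
                rw [norm_mul, norm_mul]
            _ ≤ 1 * ((c₂ * N) * G) := by
                apply mul_le_mul hr1.le _ (mul_nonneg (norm_nonneg _) (norm_nonneg _))
                  zero_le_one
                exact mul_le_mul (hfb _ htD) (hG _ htcb) (norm_nonneg _) (by positivity)
            _ = c₂ * N * G := one_mul _
        rw [show |(1:ℝ) - 0| = 1 by norm_num, mul_one] at hle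
        calc ‖CphiUg g φ f 0‖ = ‖∫ t in (0:ℝ)..1,
              φ 0 * (f ((t:ℂ) * φ 0) * deriv g ((t:ℂ) * φ 0))‖ := rfl
          _ ≤ c₂ * N * G := hle
          _ = c₂ * G * N := by ring
      have hT1 : ‖deriv (CphiUg g φ f) 0‖ ≤ c₂ * G * ‖deriv φ 0‖ * N := by
        rw [(hasDerivAt_T hφN hφm hgN hfN h0D).deriv]
        have hφ0cb : φ 0 ∈ Metric.closedBall (0:ℂ) ‖φ 0‖ := mem_closedBall_zero_iff.2 le_rfl
        calc ‖f (φ 0) * deriv g (φ 0) * deriv φ 0‖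
            = ‖f (φ 0)‖ * ‖deriv g (φ 0)‖ * ‖deriv φ 0‖ := by rw [norm_mul, norm_mul]
          _ ≤ (c₂ * N) * G * ‖deriv φ 0‖ := by
              apply mul_le_mul_of_nonneg_right _ (norm_nonneg _)
              exact mul_le_mul (hfb _ (hφm h0D)) (hG _ hφ0cb) (norm_nonneg _) (by positivity)
          _ = c₂ * G * ‖deriv φ 0‖ * N := by ring
      have hsup : sSup (zygS β (CphiUg g φ f) '' uD) ≤ (c₁ * M₂ + c₂ * M₁) * N := by
        refine csSup_le ⟨zygS β (CphiUg g φ f) 0, ⟨0, h0D, rfl⟩⟩ ?_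
        rintro x ⟨z, hz, rfl⟩
        exact hzyg z hz
      have hfinal : zNorm β (CphiUg g φ f) =
          ‖CphiUg g φ f 0‖ + ‖deriv (CphiUg g φ f) 0‖ +
            sSup (zygS β (CphiUg g φ f) '' uD) := rfl
      rw [hfinal]
      have hC₀N : C₀ * N = c₂ * G * N + c₂ * G * ‖deriv φ 0‖ * N + (c₁ * M₂ + c₂ * M₁) * N := by
        rw [hC₀]; ring
      rw [hC₀N]
      linarith
    refine ⟨fun f hf => (main f hf).1, C₀ + 1, by linarith, fun f hf => ?_⟩
    calc zNorm β (CphiUg g φ f) ≤ C₀ * zNorm α f := (main f hf).2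
      _ ≤ (C₀ + 1) * zNorm α f := by
          apply mul_le_mul_of_nonneg_right (by linarith) (zNorm_nonneg hf)
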